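/- Let N ≥ 1, c > 0, and 0 < ξ < c, and define the complex polynomial p(z) = z^{4N+6} + (ξ/c) z^{4N+5} − (ξ/c) z + 1. Then: (i) p(i) = p(−i) = 0; (ii) if p(z) = 0 and |z| = 1, then z = i or z = −i; (iii) if p(z) = 0 and Re z = 0, then z = i or z = −i. -/

import Mathlib

open Complex

/-- Even real power equal to one forces ±1. -/
lemma real_even_pow_eq_one {t : ℝ} {k : ℕ} (h : t ^ (2 * (k + 1)) = 1) :
    t = 1 ∨ t = -1 := by
  have hsq : t ^ 2 = 1 := by
    rw [pow_mul] at h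
    rcases lt_trichotomy (t ^ 2) 1 with hlt | heq | hgt
    · have : (t ^ 2) ^ (k + 1) < 1 := pow_lt_one₀ (sq_nonneg t) hlt (Nat.succ_ne_zero k)
      linarith
    · exact heq
    · have : 1 < (t ^ 2) ^ (k + 1) := one_lt_pow₀ hgt (Nat.succ_ne_zero k)
      linarith
  have : (t - 1) * (t + 1) = 0 := by ring_nf; nlinarith [hsq]
  rcases mul_eq_zero.1 this with h | h
  · left; linarith
  · right; linarith

/-- for p(z) = z^{4N+6} + (ξ/c)z^{4N+5} − (ξ/c)z + 1 with 0 < ξ < c: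
(i) p(±i) = 0; (ii) the only roots on the unit circle are ±i; (iii) the only
purely imaginary roots are ±i. -/
theorem charPoly_roots_on_circle (N : ℕ) (hN : 1 ≤ N) (c ξ : ℝ) (hc : 0 < c)
    (hξ0 : 0 < ξ) (hξc : ξ < c) :
    (fun z : ℂ => z^(4*N+6) + ((ξ/c : ℝ) : ℂ)*z^(4*N+5) - ((ξ/c : ℝ) : ℂ)*z + 1) I = 0 ∧
    (fun z : ℂ => z^(4*N+6) + ((ξ/c : ℝ) : ℂ)*z^(4*N+5) - ((ξ/c : ℝ) : ℂ)*z + 1) (-I) = 0 ∧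
    (∀ z : ℂ, z^(4*N+6) + ((ξ/c : ℝ) : ℂ)*z^(4*N+5) - ((ξ/c : ℝ) : ℂ)*z + 1 = 0 →
      ‖z‖ = 1 → z = I ∨ z = -I) ∧
    (∀ z : ℂ, z^(4*N+6) + ((ξ/c : ℝ) : ℂ)*z^(4*N+5) - ((ξ/c : ℝ) : ℂ)*z + 1 = 0 →
      z.re = 0 → z = I ∨ z = -I) := by
  have ha0 : 0 < ξ / c := div_pos hξ0 hc
  have ha1 : ξ / c < 1 := (div_lt_one hc).2 hξc
  set a : ℝ := ξ / c with ha_def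
  have hI4 : (I : ℂ) ^ (4 * N) = 1 := by
    rw [pow_mul, I_pow_four, one_pow]
  have hI6 : (I : ℂ) ^ (4 * N + 6) = -1 := by
    rw [pow_add, hI4, one_mul]
    norm_num [pow_succ, I_mul_I]
  have hI5 : (I : ℂ) ^ (4 * N + 5) = I := by
    rw [pow_add, hI4, one_mul]
    norm_num [pow_succ, I_mul_I]
  -- part (iii) as a key lemma
  have key : ∀ z : ℂ, z^(4*N+6) + (a : ℂ)*z^(4*N+5) - (a : ℂ)*z + 1 = 0 →
      z.re = 0 → z = I ∨ z = -I := by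
    intro z h hre
    set t : ℝ := z.im with ht
    have hz : z = (t : ℂ) * I := by
      apply Complex.ext <;> simp [hre, ht]
    rw [hz, mul_pow, mul_pow, hI6, hI5] at h
    have h' := congrArg Complex.re h
    simp [← Complex.ofReal_pow] at h'
    -- h' : t ^ (4*N+6)  related to 1
    have hpow : t ^ (4 * N + 6) = 1 := by linarith [h']
    have h46 : 4 * N + 6 = 2 * ((2 * N + 2) + 1) := by ring
    rw [h46] at hpow
    rcases real_even_pow_eq_one hpow with h1 | h1
    · left; rw [hz, h1]; simp
    · right; rw [hz, h1]; simp
  refine ⟨?_, ?_, ?_, ?_⟩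
  · simp only
    rw [hI6, hI5]
    ring
  · simp only
    have e6 : (-I : ℂ) ^ (4 * N + 6) = -1 := by
      rw [(Even.neg_pow ⟨2 * N + 3, by ring⟩ I), hI6]
    have e5 : (-I : ℂ) ^ (4 * N + 5) = -I := by
      rw [(Odd.neg_pow ⟨2 * N + 2, by ring⟩ I), hI5]
    rw [e6, e5]
    ring
  · intro z h habs
    -- rearrange: z^(4N+5) * (z + a) = a z - 1
    have hre : z.re = 0 := by
      have heq : z ^ (4 * N + 5) * (z + (a : ℂ)) = (a : ℂ) * z - 1 := by
        have : z ^ (4 * N + 6) = z ^ (4 * N + 5) * z := by rw [pow_succ]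
        rw [← sub_eq_zero]; rw [this] at h; linear_combination h
      have habs2 : ‖z + (a : ℂ)‖ = ‖(a : ℂ) * z - 1‖ := by
        have := congrArg (norm : ℂ → ℝ) heq
        rwa [norm_mul, norm_pow, habs, one_pow, one_mul] at this
      have hns : Complex.normSq (z + (a : ℂ)) = Complex.normSq ((a : ℂ) * z - 1) := by
        rw [← Complex.sq_norm, ← Complex.sq_norm, habs2]
      have hn1 : z.re ^ 2 + z.im ^ 2 = 1 := by
        have := Complex.sq_norm z
        rw [habs] at this
        simp [Complex.normSq_apply] at this
        nlinarith [this]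
      simp [Complex.normSq_apply] at hns
      have h4 : 4 * a * z.re = 0 := by linear_combination hns + (a ^ 2 - 1) * hn1
      have ha' : a ≠ 0 := ne_of_gt ha0
      rcases mul_eq_zero.1 h4 with h5 | h5
      · exact absurd h5 (by positivity)
      · exact h5
    exact key z h hre
  · exact key
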